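/- Let β ∈ [0,1), λ = 1−β, let n satisfy Assumption 1 with δ* > 0, and set γ* = δ*/λ. Let s be real with |s| < 1 such that ξ = (β−s)/(1−s) satisfies |ξ| < 1. Then the clone size generating function itself converges: lim_{t→∞} (𝒴_t(s) − β) = −δ*·Σ_{k=1}^∞ ξ^k/(γ*+k). -/

import Mathlib

open Filter Real intervalIntegral

/-- Assumption 1 on the wild-type growth function `n`. -/
def Assumption1 (n : ℝ → ℝ) : Prop :=
  (∀ τ : ℝ, τ < 0 → n τ = 0) ∧
  ContinuousOn n (Set.Ioi 0) ∧
  Filter.Tendsto n (nhdsWithin 0 (Set.Ioi 0)) (nhds (n 0)) ∧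
  (∀ τ : ℝ, 0 < τ → 0 < n τ) ∧
  MonotoneOn n (Set.Ioi 0) ∧
  (∀ x : ℝ, 0 ≤ x → ∃ L : ℝ, 0 < L ∧
    Filter.Tendsto (fun t : ℝ => n (t - x) / n t) Filter.atTop (nhds L))

open MeasureTheory Set
namespace CloneAux
variable {n : ℝ → ℝ}

lemma mono_Ici (hn : Assumption1 n) : MonotoneOn n (Set.Ici 0) := by
  obtain ⟨hzero, hcont, hrt, hpos, hmono, hlim⟩ := hn
  intro a ha b hb hab
  rcases eq_or_lt_of_le (Set.mem_Ici.1 ha) with h0a | h0a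
  · rcases eq_or_lt_of_le (le_trans (Set.mem_Ici.1 ha) hab) with h0b | h0b
    · rw [← h0a, ← h0b]
    · rw [← h0a]
      refine le_of_tendsto hrt ?_
      filter_upwards [Ioc_mem_nhdsGT_of_mem ⟨le_refl (0:ℝ), h0b⟩] with τ hτ
      exact hmono hτ.1 h0b hτ.2
  · exact hmono h0a (lt_of_lt_of_le h0a hab) hab

lemma nonneg (hn : Assumption1 n) {t : ℝ} (ht : 0 ≤ t) : 0 ≤ n t := by
  rcases eq_or_lt_of_le ht with h | h
  · have h0 : 0 ≤ n 0 := ge_of_tendsto hn.2.2.1 (by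
      filter_upwards [self_mem_nhdsWithin] with τ hτ
      exact (hn.2.2.2.1 τ hτ).le)
    rwa [← h]
  · exact (hn.2.2.2.1 t h).le

lemma nonneg' (hn : Assumption1 n) (t : ℝ) : 0 ≤ n t := by
  rcases le_or_gt 0 t with h | h
  · exact nonneg hn h
  · rw [hn.1 t h]

lemma measurable (hn : Assumption1 n) : Measurable n := by
  have hmono : Monotone (fun x : ℝ => n (max x 0)) := fun a b hab =>
    mono_Ici hn (le_max_right a 0) (le_max_right b 0) (max_le_max hab le_rfl)
  have : n = Set.indicator (Set.Ici 0) (fun x => n (max x 0)) := by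
    funext x
    rcases le_or_gt 0 x with h | h
    · simp [Set.indicator_of_mem (Set.mem_Ici.2 h), max_eq_left h]
    · rw [Set.indicator_of_notMem (by simpa using h.not_ge), hn.1 x h]
  rw [this]
  exact (hmono.measurable).indicator measurableSet_Ici

lemma intervalIntegrable (hn : Assumption1 n) {t : ℝ} (ht : 0 ≤ t) :
    IntervalIntegrable n volume 0 t := by
  apply MonotoneOn.intervalIntegrable
  rw [Set.uIcc_of_le ht]
  exact (mono_Ici hn).mono (Set.Icc_subset_Ici_self)

lemma integral_pos (hn : Assumption1 n) {t : ℝ} (ht : 0 < t) :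
    0 < ∫ τ in (0:ℝ)..t, n τ := by
  apply intervalIntegral.intervalIntegral_pos_of_pos_on (intervalIntegrable hn ht.le)
  · exact fun x hx => hn.2.2.2.1 x hx.1
  · exact ht


lemma ratio_tendsto (hn : Assumption1 n) {δ : ℝ}
    (hδlim : Tendsto (fun t : ℝ => Real.log (n t) / t) atTop (nhds δ))
    {x : ℝ} (hx : 0 ≤ x) :
    Tendsto (fun t : ℝ => n (t - x) / n t) atTop (nhds (Real.exp (-δ * x))) := by
  have hpos := hn.2.2.2.1
  have hmono := hn.2.2.2.2.1
  choose! L hLpos hL using hn.2.2.2.2.2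
  -- shifted limits
  have hshift : ∀ y : ℝ, 0 ≤ y → ∀ c : ℝ,
      Tendsto (fun t => n (t - c - y) / n (t - c)) atTop (nhds (L y)) := by
    intro y hy c
    have h := (hL y hy).comp (tendsto_atTop_add_const_right atTop (-c) tendsto_id)
    refine h.congr fun t => ?_
    simp [Function.comp, sub_eq_add_neg]
  -- L is multiplicative
  have hLmul : ∀ y, 0 ≤ y → ∀ z, 0 ≤ z → L (y + z) = L y * L z := by
    intro y hy z hz
    have h2 := (hshift y hy z).mul (hL z hz)
    have h3 : Tendsto (fun t => n (t - (y + z)) / n t) atTop (nhds (L y * L z)) := by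
      refine h2.congr' ?_
      filter_upwards [eventually_gt_atTop (y + z)] with t ht
      have htz : 0 < t - z := by linarith
      have hne : n (t - z) ≠ 0 := (hpos _ htz).ne'
      have he : t - z - y = t - (y + z) := by ring
      rw [he, div_mul_div_comm, mul_comm (n (t - (y + z))) (n (t - z)),
        mul_div_mul_left _ _ hne]
    exact tendsto_nhds_unique (hL _ (by positivity)) h3
  -- L 0 = 1
  have hL0 : L 0 = 1 := by
    refine tendsto_nhds_unique (hL 0 le_rfl) ?_
    refine Tendsto.congr' ?_ (tendsto_const_nhds (x := (1:ℝ)))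
    filter_upwards [eventually_gt_atTop (0:ℝ)] with t ht
    rw [sub_zero, div_self (hpos t ht).ne']
  -- L is antitone
  have hLanti : ∀ y, 0 ≤ y → ∀ z, y ≤ z → L z ≤ L y := by
    intro y hy z hyz
    refine le_of_tendsto_of_tendsto (hL z (hy.trans hyz)) (hL y hy) ?_
    filter_upwards [eventually_gt_atTop z] with t ht
    have h1 : 0 < t - z := by linarith
    have h2 : 0 < n t := hpos t (by linarith)
    gcongr
    exact hmono h1 (by linarith : (0:ℝ) < t - y) (by linarith)
  set M : ℝ → ℝ := fun y => Real.log (L y) with hMdef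
  have hMadd : ∀ y, 0 ≤ y → ∀ z, 0 ≤ z → M (y + z) = M y + M z := by
    intro y hy z hz
    simp only [hMdef]
    rw [hLmul y hy z hz, Real.log_mul (hLpos y hy).ne' (hLpos z hz).ne']
  have hM0 : M 0 = 0 := by simp [hMdef, hL0]
  have hManti : ∀ y, 0 ≤ y → ∀ z, y ≤ z → M z ≤ M y := by
    intro y hy z hyz
    exact Real.log_le_log (hLpos z (hy.trans hyz)) (hLanti y hy z hyz)
  have hM1le : M 1 ≤ 0 := by
    have := hManti 0 le_rfl 1 zero_le_one
    rwa [hM0] at this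
  have hMnat : ∀ y, 0 ≤ y → ∀ k : ℕ, M ((k : ℝ) * y) = (k : ℝ) * M y := by
    intro y hy k
    induction k with
    | zero => simpa using hM0
    | succ k ih =>
      have he : ((k+1 : ℕ) : ℝ) * y = (k : ℝ) * y + y := by push_cast; ring
      rw [he, hMadd _ (by positivity) _ hy, ih]
      push_cast; ring
  have hMnatdiv : ∀ p q : ℕ, 0 < q → M ((p : ℝ) / q) = ((p:ℝ)/q) * M 1 := by
    intro p q hq
    have hq' : ((q:ℝ)) ≠ 0 := Nat.cast_ne_zero.2 hq.ne'
    have e1 : (q:ℝ) * M ((p:ℝ)/q) = M ((q:ℝ) * ((p:ℝ)/q)) := (hMnat _ (by positivity) q).symm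
    have e2 : (q:ℝ) * ((p:ℝ)/q) = (p:ℝ) := by field_simp
    have e3 : M (p:ℝ) = (p:ℝ) * M 1 := by
      have := hMnat 1 zero_le_one p
      simpa using this
    have h1 : (q:ℝ) * M ((p:ℝ)/q) = (q:ℝ) * (((p:ℝ)/q) * M 1) := by
      rw [e1, e2, e3]; field_simp
    exact mul_left_cancel₀ hq' h1
  have hMrat : ∀ r : ℚ, 0 ≤ r → M (r : ℝ) = (r : ℝ) * M 1 := by
    intro r hr
    have hnum : (0:ℤ) ≤ r.num := Rat.num_nonneg.2 hr
    have he : ((r:ℝ)) = ((r.num.toNat : ℕ) : ℝ) / ((r.den : ℕ) : ℝ) := by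
      rw [Rat.cast_def]
      congr 1
      exact_mod_cast (Int.toNat_of_nonneg hnum).symm
    rw [he]
    exact hMnatdiv _ _ r.pos
  have hMlin : ∀ y, 0 ≤ y → M y = y * M 1 := by
    intro y hy
    have key : ∀ ε : ℝ, 0 < ε → |M y - y * M 1| ≤ ε * (-(M 1)) := by
      intro ε hε
      rcases eq_or_lt_of_le hy with hy0 | hy0
      · rw [← hy0, hM0]
        simp only [zero_mul, sub_zero, abs_zero]
        exact mul_nonneg hε.le (neg_nonneg.2 hM1le)
      · obtain ⟨r, hr1, hr2⟩ := exists_rat_btwn (lt_add_of_pos_right y hε)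
        obtain ⟨r', hr'1, hr'2⟩ := exists_rat_btwn (show max (y - ε) 0 < y from
          max_lt (by linarith) hy0)
        have hr0 : (0:ℚ) ≤ r := by
          have : (0:ℝ) ≤ (r:ℝ) := hy.trans hr1.le
          exact_mod_cast this
        have hr'0 : (0:ℚ) ≤ r' := by
          have : (0:ℝ) ≤ (r':ℝ) := le_trans (le_max_right _ _) hr'1.le
          exact_mod_cast this
        have hMr := hMrat r hr0
        have hMr' := hMrat r' hr'0
        have hub : M y ≤ M (r' : ℝ) := hManti _ (by exact_mod_cast hr'0) _ hr'2.le
        have hlb : M (r : ℝ) ≤ M y := hManti _ hy _ hr1.le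
        have hb1 : (y + ε) * M 1 ≤ (r:ℝ) * M 1 :=
          mul_le_mul_of_nonpos_right hr2.le hM1le
        have hb2 : (r':ℝ) * M 1 ≤ (y - ε) * M 1 := by
          have : y - ε ≤ (r':ℝ) := le_trans (le_max_left _ _) hr'1.le
          exact mul_le_mul_of_nonpos_right this hM1le
        rw [hMr] at hlb
        rw [hMr'] at hub
        rw [abs_le]
        constructor <;> nlinarith
    have habs : |M y - y * M 1| ≤ 0 := by
      refine le_of_forall_pos_le_add ?_
      intro ε hε
      rcases eq_or_lt_of_le hM1le with h10 | h10
      · have hk := key ε hε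
        simp only [h10, mul_zero, sub_zero, neg_zero] at hk ⊢
        linarith
      · have hpos' : 0 < -(M 1) := by linarith
        have hk := key (ε / (-(M 1))) (by positivity)
        rw [div_mul_cancel₀ _ hpos'.ne'] at hk
        linarith
    have := abs_nonpos_iff.1 habs
    linarith [sub_eq_zero.1 this]
  -- identify M 1 = -δ
  have hlog1 : Tendsto (fun t : ℝ => Real.log (n (t-1)) - Real.log (n t)) atTop (nhds (M 1)) := by
    have h0 := (Real.continuousAt_log (hLpos 1 zero_le_one).ne').tendsto.comp (hL 1 zero_le_one)
    refine h0.congr' ?_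
    filter_upwards [eventually_gt_atTop (1:ℝ)] with t ht
    have h1 : 0 < n (t-1) := hpos _ (by linarith)
    have h2 : 0 < n t := hpos _ (by linarith)
    simp [Function.comp, Real.log_div h1.ne' h2.ne']
  have hu : Tendsto (fun m : ℕ => Real.log (n ((m:ℝ)+2)) - Real.log (n ((m:ℝ)+1)))
      atTop (nhds (-(M 1))) := by
    have hcomp := hlog1.comp
      (tendsto_atTop_add_const_right atTop (2:ℝ) tendsto_natCast_atTop_atTop)
    have h1 : Tendsto (fun m : ℕ => Real.log (n ((m:ℝ)+1)) - Real.log (n ((m:ℝ)+2)))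
        atTop (nhds (M 1)) := by
      refine hcomp.congr fun m => ?_
      have e1 : (m:ℝ) + 2 - 1 = (m:ℝ) + 1 := by ring
      simp only [Function.comp]
      rw [e1]
    have := h1.neg
    simpa using this
  have hces := hu.cesaro
  have hsum : ∀ m : ℕ, (∑ i ∈ Finset.range m,
      (Real.log (n ((i:ℝ)+2)) - Real.log (n ((i:ℝ)+1))))
      = Real.log (n ((m:ℝ)+1)) - Real.log (n 1) := by
    intro m
    have h := Finset.sum_range_sub (fun i : ℕ => Real.log (n ((i:ℝ)+1))) m
    calc ∑ i ∈ Finset.range m, (Real.log (n ((i:ℝ)+2)) - Real.log (n ((i:ℝ)+1)))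
        = ∑ i ∈ Finset.range m,
          (Real.log (n (((i+1 : ℕ):ℝ)+1)) - Real.log (n ((i:ℝ)+1))) := by
          refine Finset.sum_congr rfl fun i _ => ?_
          have e1 : ((i+1 : ℕ) : ℝ) + 1 = (i:ℝ) + 2 := by push_cast; ring
          rw [e1]
      _ = Real.log (n (((m:ℕ):ℝ)+1)) - Real.log (n (((0:ℕ):ℝ)+1)) := h
      _ = Real.log (n ((m:ℝ)+1)) - Real.log (n 1) := by norm_num
  have hc1 : Tendsto (fun m : ℕ => (Real.log (n ((m:ℝ)+1)) - Real.log (n 1)) / m)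
      atTop (nhds (-(M 1))) := by
    refine hces.congr fun m => ?_
    rw [hsum m, inv_mul_eq_div]
  have hc2 : Tendsto (fun m : ℕ => Real.log (n ((m:ℝ)+1)) / ((m:ℝ)+1)) atTop (nhds δ) :=
    hδlim.comp (tendsto_atTop_add_const_right atTop (1:ℝ) tendsto_natCast_atTop_atTop)
  have hfrac : Tendsto (fun m : ℕ => ((m:ℝ)+1)/m) atTop (nhds 1) := by
    have h := (tendsto_const_nhds (x := (1:ℝ)) (f := atTop (α := ℕ))).add
      tendsto_one_div_atTop_nhds_zero_nat
    rw [add_zero] at h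
    refine h.congr' ?_
    filter_upwards [eventually_ge_atTop 1] with m hm
    have hm' : ((m:ℝ)) ≠ 0 := Nat.cast_ne_zero.2 (by omega)
    field_simp
  have hc3 := (hc2.mul hfrac).sub
    ((tendsto_const_nhds (x := Real.log (n 1))).mul tendsto_one_div_atTop_nhds_zero_nat)
  rw [mul_one, mul_zero, sub_zero] at hc3
  have hc4 : Tendsto (fun m : ℕ => (Real.log (n ((m:ℝ)+1)) - Real.log (n 1)) / m)
      atTop (nhds δ) := by
    refine hc3.congr' ?_
    filter_upwards [eventually_ge_atTop 1] with m hm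
    have hm' : ((m:ℝ)) ≠ 0 := Nat.cast_ne_zero.2 (by omega)
    have hm'' : ((m:ℝ)) + 1 ≠ 0 := by positivity
    field_simp
  have hM1δ : -(M 1) = δ := tendsto_nhds_unique hc1 hc4
  have hLx : L x = Real.exp (-δ * x) := by
    have h1 : L x = Real.exp (M x) := (Real.exp_log (hLpos x hx)).symm
    rw [h1, hMlin x hx]
    congr 1
    have hM1 : M 1 = -δ := by linarith
    rw [hM1]; ring
  rw [← hLx]
  exact hL x hx

lemma domination (hn : Assumption1 n) {δ : ℝ}
    (hδlim : Tendsto (fun t : ℝ => Real.log (n t) / t) atTop (nhds δ)) (hδpos : 0 < δ) :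
    ∃ T C η : ℝ, 1 ≤ T ∧ 0 < η ∧ 0 < C ∧
      ∀ t, T ≤ t → ∀ x, 0 ≤ x → x ≤ t → n (t - x) ≤ C * Real.exp (-η * x) * n t := by
  have hpos := hn.2.2.2.1
  set η := δ/2 with hη'
  have hη : 0 < η := by positivity
  have hratio := ratio_tendsto hn hδlim (zero_le_one)
  have hlt : Real.exp (-δ * 1) < Real.exp (-η) := by
    rw [Real.exp_lt_exp, hη']; linarith
  obtain ⟨T₀, hT₀⟩ := eventually_atTop.1 (hratio.eventually_lt_const hlt)
  set T := max T₀ 1 with hT'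
  have hT1 : (1:ℝ) ≤ T := le_max_right _ _
  have hstep : ∀ t : ℝ, T ≤ t → n (t - 1) ≤ Real.exp (-η) * n t := by
    intro t ht
    have hnt : 0 < n t := hpos t (by linarith)
    have h := hT₀ t (le_trans (le_max_left _ _) ht)
    rw [div_lt_iff₀ hnt] at h
    linarith [h]
  have hiter : ∀ m : ℕ, ∀ t : ℝ, T + m ≤ t → n (t - m) ≤ Real.exp (-η * m) * n t := by
    intro m
    induction m with
    | zero => intro t ht; simp
    | succ m ih =>
      intro t ht
      have hcast : ((m+1 : ℕ):ℝ) = (m:ℝ) + 1 := by push_cast; ring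
      rw [hcast] at ht
      have h1 : T + (m:ℝ) ≤ t - 1 := by linarith
      have h2 := ih (t-1) h1
      have h3 := hstep t (by linarith [Nat.cast_nonneg (α := ℝ) m])
      have e : t - ((m+1:ℕ):ℝ) = t - 1 - m := by push_cast; ring
      rw [e]
      calc n (t - 1 - (m:ℝ)) ≤ Real.exp (-η * m) * n (t-1) := h2
        _ ≤ Real.exp (-η * m) * (Real.exp (-η) * n t) :=
            mul_le_mul_of_nonneg_left h3 (Real.exp_nonneg _)
        _ = Real.exp (-η * ((m+1:ℕ):ℝ)) * n t := by
            rw [← mul_assoc, ← Real.exp_add]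
            congr 2
            push_cast; ring
  refine ⟨T, Real.exp (η * (T+1)), η, hT1, hη, Real.exp_pos _, ?_⟩
  intro t ht x hx hxt
  have hnt : 0 < n t := hpos t (by linarith)
  rcases le_or_gt x (t - T) with hcase | hcase
  · set m := ⌊x⌋₊ with hm
    have hm1 : (m:ℝ) ≤ x := Nat.floor_le hx
    have hm2 : x < m + 1 := Nat.lt_floor_add_one x
    have h1 : n (t - x) ≤ n (t - m) :=
      mono_Ici hn (Set.mem_Ici.2 (by linarith)) (Set.mem_Ici.2 (by linarith))
        (by linarith)
    have h2 := hiter m t (by linarith)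
    have h4 : Real.exp (-η * m) ≤ Real.exp (η * (T+1)) * Real.exp (-η * x) := by
      rw [← Real.exp_add, Real.exp_le_exp]
      have e1 : -η * m ≤ η * 1 + -η * x := by nlinarith
      have e2 : η * 1 ≤ η * (T+1) := by nlinarith
      linarith
    calc n (t - x) ≤ n (t - m) := h1
      _ ≤ Real.exp (-η * m) * n t := h2
      _ ≤ (Real.exp (η * (T+1)) * Real.exp (-η * x)) * n t :=
          mul_le_mul_of_nonneg_right h4 hnt.le
  · set m := ⌊t - T⌋₊ with hm
    have h0 : 0 ≤ t - T := by linarith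
    have hm1 : (m:ℝ) ≤ t - T := Nat.floor_le h0
    have hm2 : t - T < m + 1 := Nat.lt_floor_add_one _
    have h1 : n (t - x) ≤ n T :=
      mono_Ici hn (Set.mem_Ici.2 (by linarith)) (Set.mem_Ici.2 (by linarith))
        (by linarith)
    have h2 : n T ≤ n (t - m) :=
      mono_Ici hn (Set.mem_Ici.2 (by linarith)) (Set.mem_Ici.2 (by linarith))
        (by linarith)
    have h3 := hiter m t (by linarith)
    have h4 : Real.exp (-η * m) ≤ Real.exp (η * (T+1)) * Real.exp (-η * x) := by
      rw [← Real.exp_add, Real.exp_le_exp]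
      have e1 : x - m ≤ T + 1 := by linarith
      nlinarith
    calc n (t - x) ≤ n T := h1
      _ ≤ n (t - m) := h2
      _ ≤ Real.exp (-η * m) * n t := h3
      _ ≤ (Real.exp (η * (T+1)) * Real.exp (-η * x)) * n t :=
          mul_le_mul_of_nonneg_right h4 hnt.le


lemma conv_tendsto (hn : Assumption1 n) {δ : ℝ}
    (hδlim : Tendsto (fun t : ℝ => Real.log (n t) / t) atTop (nhds δ)) (hδpos : 0 < δ)
    {μ : ℝ} (hμ : 0 ≤ μ) :
    Tendsto (fun t : ℝ => (∫ x in (0:ℝ)..t, n (t - x) * Real.exp (-μ * x)) / n t)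
      atTop (nhds (1/(δ+μ))) := by
  have hpos := hn.2.2.2.1
  obtain ⟨T, C, η, hT1, hη, hC, hbound⟩ := domination hn hδlim hδpos
  have hmeas := measurable hn
  set F : ℝ → ℝ → ℝ := fun t x =>
    Set.indicator (Set.Ioc 0 t) (fun x => n (t - x) * Real.exp (-μ * x) / n t) x with hF
  set g : ℝ → ℝ := fun x =>
    Set.indicator (Set.Ioi 0) (fun x => Real.exp (-(δ+μ) * x)) x with hg
  set bound : ℝ → ℝ := fun x =>
    Set.indicator (Set.Ioi 0) (fun x => C * Real.exp (-η * x)) x with hbnd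
  have hmain : Tendsto (fun t => ∫ x : ℝ, F t x) atTop (nhds (∫ x : ℝ, g x)) := by
    apply MeasureTheory.tendsto_integral_filter_of_dominated_convergence bound
    · filter_upwards [eventually_ge_atTop (1:ℝ)] with t ht
      refine (Measurable.aestronglyMeasurable ?_)
      exact (((hmeas.comp (measurable_const.sub measurable_id)).mul
        ((measurable_id.const_mul (-μ)).exp)).div_const (n t)).indicator measurableSet_Ioc
    · filter_upwards [eventually_ge_atTop (max T 1)] with t ht
      refine Filter.Eventually.of_forall fun x => ?_
      rcases le_or_gt x 0 with hx0 | hx0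
      · have hxnot : x ∉ Set.Ioc 0 t := fun hmem => absurd hmem.1 (not_lt.2 hx0)
        have hxnot' : x ∉ Set.Ioi 0 := by simpa using hx0
        rw [hF]
        simp only [Set.indicator_of_notMem hxnot]
        rw [hbnd]
        simp only [Set.indicator_of_notMem hxnot', norm_zero, le_refl]
      · rcases le_or_gt x t with hxt | hxt
        · have hmem : x ∈ Set.Ioc 0 t := ⟨hx0, hxt⟩
          rw [hF, hbnd]
          simp only [Set.indicator_of_mem hmem,
            Set.indicator_of_mem (Set.mem_Ioi.2 hx0)]
          have hnt : 0 < n t := hpos t (by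
            have := le_trans (le_max_right T 1) ht; linarith)
          have hb := hbound t (le_trans (le_max_left T 1) ht) x hx0.le hxt
          have hval : 0 ≤ n (t - x) * Real.exp (-μ * x) / n t :=
            div_nonneg (mul_nonneg (nonneg' hn _) (Real.exp_nonneg _)) hnt.le
          rw [Real.norm_of_nonneg hval, div_le_iff₀ hnt]
          calc n (t - x) * Real.exp (-μ * x)
              ≤ n (t - x) * 1 := by
                refine mul_le_mul_of_nonneg_left ?_ (nonneg' hn _)
                exact Real.exp_le_one_iff.2 (by nlinarith)
            _ = n (t - x) := mul_one _
            _ ≤ C * Real.exp (-η * x) * n t := hb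
        · have hxnot : x ∉ Set.Ioc 0 t := fun hmem => absurd hmem.2 (not_le.2 hxt)
          rw [hF, hbnd]
          simp only [Set.indicator_of_notMem hxnot, norm_zero,
            Set.indicator_of_mem (Set.mem_Ioi.2 hx0)]
          positivity
    · rw [hbnd, MeasureTheory.integrable_indicator_iff measurableSet_Ioi]
      exact (exp_neg_integrableOn_Ioi 0 hη).const_mul C
    · refine Filter.Eventually.of_forall fun x => ?_
      rcases le_or_gt x 0 with hx0 | hx0
      · have hxnot' : x ∉ Set.Ioi 0 := by simpa using hx0
        rw [hF, hg]
        simp only [Set.indicator_of_notMem hxnot']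
        refine Tendsto.congr' ?_ tendsto_const_nhds
        refine Filter.Eventually.of_forall fun t => ?_
        have hxnot : x ∉ Set.Ioc 0 t := fun hmem => absurd hmem.1 (not_lt.2 hx0)
        simp only [Set.indicator_of_notMem hxnot]
      · rw [hF, hg]
        simp only [Set.indicator_of_mem (Set.mem_Ioi.2 hx0)]
        have hr := (ratio_tendsto hn hδlim hx0.le).mul_const (Real.exp (-μ * x))
        have he : Real.exp (-δ * x) * Real.exp (-μ * x) = Real.exp (-(δ+μ) * x) := by
          rw [← Real.exp_add]; congr 1; ring
        rw [he] at hr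
        refine hr.congr' ?_
        filter_upwards [eventually_ge_atTop x] with t ht
        have hmem : x ∈ Set.Ioc 0 t := ⟨hx0, ht⟩
        rw [Set.indicator_of_mem hmem]
        rw [div_mul_eq_mul_div]
  have hgval : (∫ x : ℝ, g x) = 1/(δ+μ) := by
    rw [hg, MeasureTheory.integral_indicator measurableSet_Ioi]
    have hδμ : 0 < δ + μ := by linarith
    have e1 : ∀ x : ℝ, Real.exp (-(δ+μ) * x) = (fun y => Real.exp (-y)) ((δ+μ) * x) := by
      intro x; simp only [neg_mul]
    calc (∫ x in Set.Ioi (0:ℝ), Real.exp (-(δ+μ) * x))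
        = ∫ x in Set.Ioi (0:ℝ), (fun y => Real.exp (-y)) ((δ+μ) * x) := by
          refine MeasureTheory.setIntegral_congr_fun measurableSet_Ioi fun x _ => e1 x
      _ = (δ+μ)⁻¹ • ∫ x in Set.Ioi ((δ+μ) * 0), Real.exp (-x) :=
          MeasureTheory.integral_comp_mul_left_Ioi (fun y => Real.exp (-y)) 0 hδμ
      _ = 1/(δ+μ) := by
          rw [mul_zero, integral_exp_neg_Ioi]
          simp [smul_eq_mul, one_div]
  rw [← hgval]
  refine hmain.congr' ?_
  filter_upwards [eventually_ge_atTop (1:ℝ)] with t ht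
  rw [hF]
  rw [MeasureTheory.integral_indicator measurableSet_Ioc,
    intervalIntegral.integral_of_le (by linarith : (0:ℝ) ≤ t),
    MeasureTheory.integral_div]


end CloneAux

/-- For exponential-type wild-type growth (`δ* > 0`), the clone size generating function
itself converges: `lim_{t→∞}(𝒴_t(s) − β) = −δ* Σ_{k≥1} ξ^k/(γ*+k)`, where
`𝒴_t(s) = (1/a_t)∫_0^t n_τ Z_{t−τ}(s) dτ`, `Z_u(s) = 1 − λ/(1 − ξ e^{−λu})`,
`ξ = (β−s)/(1−s)`, `λ = 1−β`, `γ* = δ*/λ`. -/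
theorem limit_clone_generating_function_exponential_type
    (β : ℝ) (hβ : β ∈ Set.Ico (0 : ℝ) 1) (lam : ℝ) (hlam : lam = 1 - β)
    (n : ℝ → ℝ) (hn : Assumption1 n) (δ : ℝ)
    (hδlim : Filter.Tendsto (fun t : ℝ => Real.log (n t) / t) Filter.atTop (nhds δ))
    (hδpos : 0 < δ)
    (s ξ γ : ℝ) (hs : |s| < 1) (hξdef : ξ = (β - s) / (1 - s)) (hξ : |ξ| < 1)
    (hγ : γ = δ / lam) :
    Filter.Tendsto
      (fun t : ℝ =>
        (1 / ∫ τ in (0:ℝ)..t, n τ) *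
          (∫ τ in (0:ℝ)..t, n τ * (1 - lam / (1 - ξ * Real.exp (-lam * (t - τ))))) - β)
      Filter.atTop
      (nhds (-δ * ∑' k : ℕ, ξ ^ (k + 1) / (γ + (k + 1)))) := by
  obtain ⟨hβ0, hβ1⟩ := hβ
  have hlam0 : 0 < lam := by rw [hlam]; linarith
  have hpos := hn.2.2.2.1
  -- limit of a_t / n_t
  have hA0 : Tendsto (fun t : ℝ => (∫ τ in (0:ℝ)..t, n τ) / n t) atTop (nhds (1/δ)) := by
    have h := CloneAux.conv_tendsto hn hδlim hδpos (le_refl (0:ℝ))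
    rw [add_zero] at h
    refine h.congr' ?_
    filter_upwards [eventually_ge_atTop (0:ℝ)] with t ht
    congr 1
    have hcomp := intervalIntegral.integral_comp_sub_left n t (a := (0:ℝ)) (b := t)
    rw [sub_self, sub_zero] at hcomp
    rw [← hcomp]
    refine intervalIntegral.integral_congr fun x hx => ?_
    simp
  -- per-k limits
  have hterm : ∀ k : ℕ, Tendsto (fun t : ℝ =>
      (-lam * ξ^(k+1)) * ((∫ x in (0:ℝ)..t, n (t - x) * Real.exp (-(lam*((k:ℝ)+1)) * x))
        / (∫ τ in (0:ℝ)..t, n τ))) atTop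
      (nhds (-δ * (ξ^(k+1) / (γ + ((k:ℝ)+1))))) := by
    intro k
    have hμpos : (0:ℝ) < lam * ((k:ℝ)+1) := by positivity
    have hJ := CloneAux.conv_tendsto hn hδlim hδpos hμpos.le
    have hdiv := hJ.div hA0 (one_div_ne_zero hδpos.ne')
    have hδμ : 0 < δ + lam*((k:ℝ)+1) := by positivity
    have hval : (1/(δ + lam*((k:ℝ)+1))) / (1/δ) = δ / (δ + lam*((k:ℝ)+1)) := by
      field_simp
    rw [hval] at hdiv
    have hratio : Tendsto (fun t : ℝ =>
        (∫ x in (0:ℝ)..t, n (t - x) * Real.exp (-(lam*((k:ℝ)+1)) * x))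
          / (∫ τ in (0:ℝ)..t, n τ))
        atTop (nhds (δ / (δ + lam*((k:ℝ)+1)))) := by
      refine hdiv.congr' ?_
      filter_upwards [eventually_gt_atTop (0:ℝ)] with t ht
      have hnt : n t ≠ 0 := (hpos t ht).ne'
      have hAt : (∫ τ in (0:ℝ)..t, n τ) ≠ 0 := (CloneAux.integral_pos hn ht).ne'
      simp only [Pi.div_apply]
      rw [div_div_div_cancel_right₀ hnt]
    have hconst := hratio.const_mul (-lam * ξ^(k+1))
    have hcval : (-lam * ξ^(k+1)) * (δ / (δ + lam*((k:ℝ)+1)))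
        = -δ * (ξ^(k+1) / (γ + ((k:ℝ)+1))) := by
      have h2 : 0 < δ/lam + ((k:ℝ)+1) := add_pos (div_pos hδpos hlam0) (by positivity)
      have hne1 : δ + lam*((k:ℝ)+1) ≠ 0 := hδμ.ne'
      have hne2 : lam ≠ 0 := hlam0.ne'
      have hne3 : δ/lam + ((k:ℝ)+1) ≠ 0 := h2.ne'
      rw [hγ]
      field_simp
    rw [hcval] at hconst
    exact hconst
  -- uniform bound
  have hbound : ∀ᶠ t : ℝ in atTop, ∀ k : ℕ,
      ‖(-lam * ξ^(k+1)) * ((∫ x in (0:ℝ)..t, n (t - x) * Real.exp (-(lam*((k:ℝ)+1)) * x))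
        / (∫ τ in (0:ℝ)..t, n τ))‖ ≤ lam * |ξ|^(k+1) := by
    filter_upwards [eventually_gt_atTop (0:ℝ)] with t ht k
    have hApos := CloneAux.integral_pos hn ht
    have hJnonneg : 0 ≤ ∫ x in (0:ℝ)..t, n (t - x) * Real.exp (-(lam*((k:ℝ)+1)) * x) :=
      intervalIntegral.integral_nonneg ht.le fun x hx =>
        mul_nonneg (CloneAux.nonneg' hn _) (Real.exp_nonneg _)
    have hIntnx : IntervalIntegrable (fun x => n (t - x)) volume 0 t := by
      have h := (CloneAux.intervalIntegrable hn ht.le).comp_sub_left t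
      rw [sub_zero, sub_self] at h
      exact h.symm
    have hIntk : IntervalIntegrable
        (fun x => n (t - x) * Real.exp (-(lam*((k:ℝ)+1)) * x)) volume 0 t :=
      hIntnx.mul_continuousOn (Continuous.continuousOn (by fun_prop))
    have hAeq : (∫ τ in (0:ℝ)..t, n τ) = ∫ x in (0:ℝ)..t, n (t - x) := by
      have hcomp := intervalIntegral.integral_comp_sub_left n t (a := (0:ℝ)) (b := t)
      rw [sub_self, sub_zero] at hcomp
      rw [hcomp]
    have hJle : (∫ x in (0:ℝ)..t, n (t - x) * Real.exp (-(lam*((k:ℝ)+1)) * x))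
        ≤ ∫ τ in (0:ℝ)..t, n τ := by
      rw [hAeq]
      refine intervalIntegral.integral_mono_on ht.le hIntk hIntnx fun x hx => ?_
      have hexp : Real.exp (-(lam*((k:ℝ)+1)) * x) ≤ 1 := by
        refine Real.exp_le_one_iff.2 ?_
        have hx0 : 0 ≤ x := hx.1
        nlinarith [mul_nonneg (mul_pos hlam0
          (show (0:ℝ) < (k:ℝ)+1 by positivity)).le hx0]
      nlinarith [CloneAux.nonneg' hn (t - x)]
    have h1 : ‖(∫ x in (0:ℝ)..t, n (t - x) * Real.exp (-(lam*((k:ℝ)+1)) * x))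
        / (∫ τ in (0:ℝ)..t, n τ)‖ ≤ 1 := by
      rw [Real.norm_of_nonneg (div_nonneg hJnonneg hApos.le)]
      exact div_le_one_of_le₀ hJle hApos.le
    calc ‖(-lam * ξ^(k+1)) * ((∫ x in (0:ℝ)..t, n (t - x) * Real.exp (-(lam*((k:ℝ)+1)) * x))
            / (∫ τ in (0:ℝ)..t, n τ))‖
        = ‖(-lam * ξ^(k+1))‖ * ‖(∫ x in (0:ℝ)..t, n (t - x) * Real.exp (-(lam*((k:ℝ)+1)) * x))
            / (∫ τ in (0:ℝ)..t, n τ)‖ := norm_mul _ _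
      _ ≤ ‖(-lam * ξ^(k+1))‖ * 1 := mul_le_mul_of_nonneg_left h1 (norm_nonneg _)
      _ = lam * |ξ|^(k+1) := by
          rw [mul_one, norm_mul, norm_neg, Real.norm_eq_abs, Real.norm_eq_abs, abs_pow,
            abs_of_pos hlam0]
  -- summable bound
  have hsumbound : Summable (fun k : ℕ => lam * |ξ|^(k+1)) := by
    have h := summable_geometric_of_lt_one (abs_nonneg ξ) hξ
    have h2 : Summable (fun k : ℕ => |ξ|^(k+1)) := by
      refine (h.mul_left |ξ|).congr fun k => ?_
      rw [← pow_succ']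
    exact h2.mul_left lam
  have htsum := tendsto_tsum_of_dominated_convergence (𝓕 := atTop)
    (f := fun (t : ℝ) (k : ℕ) => (-lam * ξ^(k+1)) *
      ((∫ x in (0:ℝ)..t, n (t - x) * Real.exp (-(lam*((k:ℝ)+1)) * x))
        / (∫ τ in (0:ℝ)..t, n τ)))
    (g := fun k : ℕ => -δ * (ξ^(k+1) / (γ + ((k:ℝ)+1))))
    (bound := fun k : ℕ => lam * |ξ|^(k+1)) hsumbound hterm hbound
  -- main identity, eventually in t
  have hident : ∀ᶠ t : ℝ in atTop,
      (1 / ∫ τ in (0:ℝ)..t, n τ) *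
        (∫ τ in (0:ℝ)..t, n τ * (1 - lam / (1 - ξ * Real.exp (-lam * (t - τ))))) - β
      = ∑' k : ℕ, (-lam * ξ^(k+1)) *
          ((∫ x in (0:ℝ)..t, n (t - x) * Real.exp (-(lam*((k:ℝ)+1)) * x))
            / (∫ τ in (0:ℝ)..t, n τ)) := by
    filter_upwards [eventually_gt_atTop (0:ℝ)] with t ht
    have hApos := CloneAux.integral_pos hn ht
    have hAne : (∫ τ in (0:ℝ)..t, n τ) ≠ 0 := hApos.ne'
    have hwlt : ∀ x : ℝ, 0 ≤ x → |ξ * Real.exp (-lam * x)| < 1 := by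
      intro x hx
      rw [abs_mul, Real.abs_exp]
      calc |ξ| * Real.exp (-lam * x) ≤ |ξ| * 1 := by
            refine mul_le_mul_of_nonneg_left ?_ (abs_nonneg ξ)
            exact Real.exp_le_one_iff.2 (by nlinarith)
        _ = |ξ| := mul_one _
        _ < 1 := hξ
    have hwne : ∀ x : ℝ, 0 ≤ x → (1:ℝ) - ξ * Real.exp (-lam * x) ≠ 0 := by
      intro x hx
      have h2 : ξ * Real.exp (-lam * x) < 1 := lt_of_le_of_lt (le_abs_self _) (hwlt x hx)
      exact sub_ne_zero_of_ne h2.ne'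
    have hIntn := CloneAux.intervalIntegrable hn ht.le
    have hIntnx : IntervalIntegrable (fun x => n (t - x)) volume 0 t := by
      have h := hIntn.comp_sub_left t
      rw [sub_zero, sub_self] at h
      exact h.symm
    have hcontZ : ContinuousOn (fun x : ℝ => 1 - lam / (1 - ξ * Real.exp (-lam * x)))
        (Set.uIcc 0 t) := by
      refine continuousOn_const.sub (ContinuousOn.div continuousOn_const ?_ ?_)
      · exact (continuous_const.sub (continuous_const.mul
          (Real.continuous_exp.comp (continuous_const.mul continuous_id)))).continuousOn
      · intro x hx
        rw [Set.uIcc_of_le ht.le] at hx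
        exact hwne x hx.1
    have hIntZ : IntervalIntegrable
        (fun x => n (t - x) * (1 - lam / (1 - ξ * Real.exp (-lam * x)))) volume 0 t :=
      hIntnx.mul_continuousOn hcontZ
    have hsubst : (∫ τ in (0:ℝ)..t, n τ * (1 - lam / (1 - ξ * Real.exp (-lam * (t - τ)))))
        = ∫ x in (0:ℝ)..t, n (t - x) * (1 - lam / (1 - ξ * Real.exp (-lam * x))) := by
      have h := intervalIntegral.integral_comp_sub_left
        (fun τ => n τ * (1 - lam / (1 - ξ * Real.exp (-lam * (t - τ))))) t (a := (0:ℝ)) (b := t)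
      rw [sub_self, sub_zero] at h
      rw [← h]
      simp only [sub_sub_cancel]
    have hAeq : (∫ τ in (0:ℝ)..t, n τ) = ∫ x in (0:ℝ)..t, n (t - x) := by
      have hcomp := intervalIntegral.integral_comp_sub_left n t (a := (0:ℝ)) (b := t)
      rw [sub_self, sub_zero] at hcomp
      rw [hcomp]
    have hstep1 : (1 / ∫ τ in (0:ℝ)..t, n τ) *
        (∫ τ in (0:ℝ)..t, n τ * (1 - lam / (1 - ξ * Real.exp (-lam * (t - τ))))) - β
        = (1 / ∫ τ in (0:ℝ)..t, n τ) *
          (∫ x in (0:ℝ)..t, n (t - x) * ((1 - lam / (1 - ξ * Real.exp (-lam * x))) - β)) := by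
      rw [hsubst]
      have hintsub : (∫ x in (0:ℝ)..t,
            n (t - x) * ((1 - lam / (1 - ξ * Real.exp (-lam * x))) - β))
          = (∫ x in (0:ℝ)..t, n (t - x) * (1 - lam / (1 - ξ * Real.exp (-lam * x))))
            - β * ∫ x in (0:ℝ)..t, n (t - x) := by
        rw [← intervalIntegral.integral_const_mul, ← intervalIntegral.integral_sub hIntZ
          ((hIntnx.const_mul β).congr ?_)]
        · refine intervalIntegral.integral_congr fun x hx => ?_
          ring
        · exact fun x _ => rfl
      rw [hintsub, ← hAeq]
      rw [mul_sub, one_div, mul_comm β, inv_mul_cancel_left₀ hAne]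
    rw [hstep1]
    have hpointwise : ∀ x ∈ Set.Ioc (0:ℝ) t,
        n (t - x) * ((1 - lam / (1 - ξ * Real.exp (-lam * x))) - β)
        = ∑' k : ℕ, (-lam * ξ^(k+1)) * (n (t - x) * Real.exp (-(lam*((k:ℝ)+1)) * x)) := by
      intro x hx
      have hwx : |ξ * Real.exp (-lam * x)| < 1 := hwlt x hx.1.le
      have hwne1 : (1:ℝ) - ξ * Real.exp (-lam * x) ≠ 0 := hwne x hx.1.le
      set w : ℝ := ξ * Real.exp (-lam * x) with hw
      have htermk : ∀ k : ℕ, (-lam * ξ^(k+1)) * (n (t - x) * Real.exp (-(lam*((k:ℝ)+1)) * x))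
          = (n (t - x) * -lam) * w^(k+1) := by
        intro k
        rw [hw, mul_pow]
        have he : Real.exp (-lam*x) ^ (k+1) = Real.exp (-(lam*((k:ℝ)+1)) * x) := by
          rw [← Real.exp_nat_mul]
          congr 1
          push_cast
          ring
        rw [he]
        ring
      have hβlam : β = 1 - lam := by rw [hlam]; ring
      calc n (t - x) * ((1 - lam / (1 - w)) - β)
          = (n (t - x) * -lam) * (w / (1 - w)) := by
            rw [hβlam]
            field_simp
            ring
        _ = (n (t - x) * -lam) * ∑' k : ℕ, w^(k+1) := by
            congr 1
            have hg : ∑' k : ℕ, w^(k+1) = w * ∑' k : ℕ, w^k := by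
              rw [← tsum_mul_left]
              exact tsum_congr fun k => (pow_succ' _ _)
            rw [hg, tsum_geometric_of_norm_lt_one (by rwa [Real.norm_eq_abs]),
              div_eq_mul_inv]
        _ = ∑' k : ℕ, (n (t - x) * -lam) * w^(k+1) :=
            (tsum_mul_left).symm
        _ = ∑' k : ℕ, (-lam * ξ^(k+1)) * (n (t - x) * Real.exp (-(lam*((k:ℝ)+1)) * x)) :=
            tsum_congr fun k => (htermk k).symm
    have hIntFk : ∀ k : ℕ, MeasureTheory.IntegrableOn
        (fun x => (-lam * ξ^(k+1)) * (n (t - x) * Real.exp (-(lam*((k:ℝ)+1)) * x)))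
        (Set.Ioc 0 t) volume := by
      intro k
      have h1 : IntervalIntegrable
          (fun x => (-lam * ξ^(k+1)) * (n (t - x) * Real.exp (-(lam*((k:ℝ)+1)) * x)))
          volume 0 t := by
        have h2 := (hIntnx.mul_continuousOn (Continuous.continuousOn
          (by fun_prop : Continuous fun x : ℝ =>
            Real.exp (-(lam*((k:ℝ)+1)) * x)))).const_mul (-lam * ξ^(k+1))
        exact h2
      exact (intervalIntegrable_iff_integrableOn_Ioc_of_le ht.le).1 h1
    have hnormle : ∀ k : ℕ, (∫ x in Set.Ioc (0:ℝ) t,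
          ‖(-lam * ξ^(k+1)) * (n (t - x) * Real.exp (-(lam*((k:ℝ)+1)) * x))‖)
        ≤ lam * |ξ|^(k+1) * ∫ τ in (0:ℝ)..t, n τ := by
      intro k
      have hle : ∀ x ∈ Set.Ioc (0:ℝ) t,
          ‖(-lam * ξ^(k+1)) * (n (t - x) * Real.exp (-(lam*((k:ℝ)+1)) * x))‖
          ≤ lam * |ξ|^(k+1) * n (t - x) := by
        intro x hx
        have hexp : Real.exp (-(lam*((k:ℝ)+1)) * x) ≤ 1 := by
          refine Real.exp_le_one_iff.2 ?_
          have hx0 : (0:ℝ) ≤ x := hx.1.le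
          nlinarith [mul_nonneg (mul_pos hlam0
            (show (0:ℝ) < (k:ℝ)+1 by positivity)).le hx0]
        have hnn := CloneAux.nonneg' hn (t - x)
        rw [norm_mul, norm_mul, norm_neg, Real.norm_eq_abs, Real.norm_eq_abs, abs_pow,
          abs_of_pos hlam0, norm_mul, Real.norm_eq_abs, Real.norm_eq_abs,
          abs_of_nonneg hnn, Real.abs_exp]
        calc lam * |ξ|^(k+1) * (n (t - x) * Real.exp (-(lam*((k:ℝ)+1)) * x))
            ≤ lam * |ξ|^(k+1) * (n (t - x) * 1) := by
              refine mul_le_mul_of_nonneg_left (mul_le_mul_of_nonneg_left hexp hnn) ?_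
              positivity
          _ = lam * |ξ|^(k+1) * n (t - x) := by ring
      have hIntnIoc : MeasureTheory.IntegrableOn (fun x => n (t - x)) (Set.Ioc 0 t) volume :=
        (intervalIntegrable_iff_integrableOn_Ioc_of_le ht.le).1 hIntnx
      calc (∫ x in Set.Ioc (0:ℝ) t,
            ‖(-lam * ξ^(k+1)) * (n (t - x) * Real.exp (-(lam*((k:ℝ)+1)) * x))‖)
          ≤ ∫ x in Set.Ioc (0:ℝ) t, lam * |ξ|^(k+1) * n (t - x) :=
            MeasureTheory.setIntegral_mono_on ((hIntFk k).norm)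
              (hIntnIoc.const_mul _) measurableSet_Ioc hle
        _ = lam * |ξ|^(k+1) * ∫ x in Set.Ioc (0:ℝ) t, n (t - x) :=
            MeasureTheory.integral_const_mul _ _
        _ = lam * |ξ|^(k+1) * ∫ τ in (0:ℝ)..t, n τ := by
            rw [← intervalIntegral.integral_of_le ht.le, ← hAeq]
    have hsumnorm : Summable (fun k : ℕ => ∫ x in Set.Ioc (0:ℝ) t,
        ‖(-lam * ξ^(k+1)) * (n (t - x) * Real.exp (-(lam*((k:ℝ)+1)) * x))‖) := by
      refine Summable.of_nonneg_of_le
        (fun k => MeasureTheory.integral_nonneg fun x => norm_nonneg _) hnormle ?_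
      exact hsumbound.mul_right _
    have hswap : (∫ x in (0:ℝ)..t,
          n (t - x) * ((1 - lam / (1 - ξ * Real.exp (-lam * x))) - β))
        = ∑' k : ℕ, ∫ x in Set.Ioc (0:ℝ) t,
            (-lam * ξ^(k+1)) * (n (t - x) * Real.exp (-(lam*((k:ℝ)+1)) * x)) := by
      rw [intervalIntegral.integral_of_le ht.le,
        MeasureTheory.setIntegral_congr_fun measurableSet_Ioc hpointwise]
      exact (MeasureTheory.integral_tsum_of_summable_integral_norm hIntFk hsumnorm).symm
    rw [hswap, ← tsum_mul_left]
    refine tsum_congr fun k => ?_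
    rw [MeasureTheory.integral_const_mul, ← intervalIntegral.integral_of_le ht.le]
    ring
  have htarget : (∑' k : ℕ, -δ * (ξ^(k+1) / (γ + ((k:ℝ)+1))))
      = -δ * ∑' k : ℕ, ξ ^ (k + 1) / (γ + (k + 1)) := tsum_mul_left
  rw [← htarget]
  exact htsum.congr' (hident.mono fun t h => h.symm)
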